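/- Let $2 < r, s < \infty$ satisfy $\tfrac{1}{r} + \tfrac{1}{s} = \tfrac{1}{2}$, let $n \ge 1$, and let $u_1 \ge u_2 \ge \cdots \ge u_n \ge 0$ be a non-increasing finite sequence of nonnegative real numbers. Then $\Big( \sum_{i=1}^{n} \big( \sum_{j=i}^{n} u_j^r \big)^{s/r} \Big)^{1/s} \le \Big( \sum_{j=1}^{n} u_j^2 \Big)^{1/2}$. -/

import Mathlib

/-- For `2 < r, s < ∞` with `1/r + 1/s = 1/2` and a non-increasing sequence
`u 1 ≥ ⋯ ≥ u n ≥ 0`, the `ℓ_s(ℓ_r)` norm of the triangular array of tails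
is at most the `ℓ_2` norm of `u`. -/
theorem lp_tail_triangle_ineq (r s : ℝ) (hr : 2 < r) (hs : 2 < s)
    (hrs : 1 / r + 1 / s = 1 / 2) (n : ℕ) (hn : 1 ≤ n) (u : ℕ → ℝ)
    (hnonneg : ∀ k, 1 ≤ k → k ≤ n → 0 ≤ u k)
    (hmono : ∀ i j, 1 ≤ i → i ≤ j → j ≤ n → u j ≤ u i) :
    (∑ i ∈ Finset.Icc 1 n, (∑ j ∈ Finset.Icc i n, u j ^ r) ^ (s / r)) ^ (1 / s)
      ≤ (∑ j ∈ Finset.Icc 1 n, u j ^ 2) ^ ((1 : ℝ) / 2) := by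
  have hr0 : (0:ℝ) < r := by linarith
  have hs0 : (0:ℝ) < s := by linarith
  have hrne : r ≠ 0 := ne_of_gt hr0
  have hsne : s ≠ 0 := ne_of_gt hs0
  have hprod : r * s = 2 * r + 2 * s := by
    field_simp at hrs
    linarith
  set S := ∑ j ∈ Finset.Icc 1 n, u j ^ 2 with hSdef
  have hS0 : 0 ≤ S := Finset.sum_nonneg fun j _ => sq_nonneg _
  have key : (∑ i ∈ Finset.Icc 1 n, (∑ j ∈ Finset.Icc i n, u j ^ r) ^ (s / r))
      ≤ S ^ (s / 2) := by
    have step1 : ∀ i ∈ Finset.Icc 1 n,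
        (∑ j ∈ Finset.Icc i n, u j ^ r) ^ (s / r) ≤ u i ^ 2 * S ^ (s / r) := by
      intro i hi
      obtain ⟨hi1, hin⟩ := Finset.mem_Icc.mp hi
      have hui : 0 ≤ u i := hnonneg i hi1 hin
      have h1 : (∑ j ∈ Finset.Icc i n, u j ^ r) ≤ u i ^ (r - 2) * S := by
        calc ∑ j ∈ Finset.Icc i n, u j ^ r
            ≤ ∑ j ∈ Finset.Icc i n, u i ^ (r - 2) * u j ^ 2 := by
              apply Finset.sum_le_sum
              intro j hj
              obtain ⟨hij, hjn⟩ := Finset.mem_Icc.mp hj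
              have huj : 0 ≤ u j := hnonneg j (le_trans hi1 hij) hjn
              have hji : u j ≤ u i := hmono i j hi1 hij hjn
              rcases eq_or_lt_of_le huj with h0 | h0
              · rw [← h0, Real.zero_rpow hrne]
                have : ((0:ℝ)) ^ 2 = 0 := by norm_num
                rw [this, mul_zero]
              · have hsplit : u j ^ r = u j ^ (r - 2) * u j ^ 2 := by
                  rw [show (u j : ℝ) ^ 2 = u j ^ ((2:ℕ):ℝ) by
                    rw [Real.rpow_natCast], ← Real.rpow_add h0]
                  norm_num
                rw [hsplit]
                apply mul_le_mul_of_nonneg_right _ (sq_nonneg _)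
                exact Real.rpow_le_rpow huj hji (by linarith)
          _ = u i ^ (r - 2) * ∑ j ∈ Finset.Icc i n, u j ^ 2 := by
              rw [Finset.mul_sum]
          _ ≤ u i ^ (r - 2) * S := by
              apply mul_le_mul_of_nonneg_left _ (Real.rpow_nonneg hui _)
              apply Finset.sum_le_sum_of_subset_of_nonneg
              · exact Finset.Icc_subset_Icc_left hi1
              · intro j _ _; exact sq_nonneg _
      have hsum_nonneg : 0 ≤ ∑ j ∈ Finset.Icc i n, u j ^ r :=
        Finset.sum_nonneg fun j hj => by
          obtain ⟨hij, hjn⟩ := Finset.mem_Icc.mp hj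
          exact Real.rpow_nonneg (hnonneg j (le_trans hi1 hij) hjn) _
      have h2 : (∑ j ∈ Finset.Icc i n, u j ^ r) ^ (s / r)
          ≤ (u i ^ (r - 2) * S) ^ (s / r) :=
        Real.rpow_le_rpow hsum_nonneg h1 (le_of_lt (div_pos hs0 hr0))
      refine h2.trans_eq ?_
      rw [Real.mul_rpow (Real.rpow_nonneg hui _) hS0, ← Real.rpow_natCast (u i) 2,
        ← Real.rpow_mul hui]
      have : (r - 2) * (s / r) = ((2:ℕ):ℝ) := by
        push_cast
        field_simp
        nlinarith [hprod]
      rw [this]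
    calc (∑ i ∈ Finset.Icc 1 n, (∑ j ∈ Finset.Icc i n, u j ^ r) ^ (s / r))
        ≤ ∑ i ∈ Finset.Icc 1 n, u i ^ 2 * S ^ (s / r) :=
          Finset.sum_le_sum step1
      _ = S * S ^ (s / r) := by rw [← Finset.sum_mul]
      _ = S ^ (1 + s / r) := by
          rw [Real.rpow_add' hS0 (by positivity), Real.rpow_one]
      _ = S ^ (s / 2) := by
          congr 1
          field_simp
          nlinarith [hprod]
  have lhs_nonneg : 0 ≤ ∑ i ∈ Finset.Icc 1 n, (∑ j ∈ Finset.Icc i n, u j ^ r) ^ (s / r) :=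
    Finset.sum_nonneg fun i _ => Real.rpow_nonneg
      (Finset.sum_nonneg fun j hj => by
        obtain ⟨hij, hjn⟩ := Finset.mem_Icc.mp hj
        have hi1 : 1 ≤ i := (Finset.mem_Icc.mp ‹i ∈ Finset.Icc 1 n›).1
        exact Real.rpow_nonneg (hnonneg j (le_trans hi1 hij) hjn) _) _
  calc (∑ i ∈ Finset.Icc 1 n, (∑ j ∈ Finset.Icc i n, u j ^ r) ^ (s / r)) ^ (1 / s)
      ≤ (S ^ (s / 2)) ^ (1 / s) :=
        Real.rpow_le_rpow lhs_nonneg key (by positivity)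
    _ = S ^ ((1:ℝ) / 2) := by
        rw [← Real.rpow_mul hS0]
        congr 1
        field_simp
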